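/- Let T be a braided self-adjoint contraction on H ⊗ H (H finite-dimensional). If X ∈ ker P_n, then for every i the element e_i* ⊗ X, rewritten via the Wick relations, lies in ker P_{n-1} + ker P_n ⊗ H*; concretely, μ(e_i*)R_n X ∈ ker P_{n-1} and μ(e_i*)T_1T_2⋯T_n(X ⊗ e_k) ∈ ker P_n for each k, where μ(e_i*) is the annihilation operator. -/

import Mathlib

open scoped ComplexOrder

namespace Wick

/-- The operator `T_i = 1^{⊗(i-1)} ⊗ T ⊗ 1^{⊗(n-i-1)}` on `H^{⊗n}` (1-indexed, acting on
tensor factors `i` and `i+1`), where `H = ℂ^d` and `H^{⊗n}` is identified with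
functions `(Fin n → Fin d) → ℂ` via the basis of elementary tensors. -/
noncomputable def Ti (d n : ℕ) (T : Matrix (Fin d × Fin d) (Fin d × Fin d) ℂ) (i : ℕ) :
    Matrix (Fin n → Fin d) (Fin n → Fin d) ℂ :=
  if h : 1 ≤ i ∧ i < n then
    fun w w' =>
      T (w ⟨i - 1, by omega⟩, w ⟨i, h.2⟩) (w' ⟨i - 1, by omega⟩, w' ⟨i, h.2⟩) *
        ∏ j : Fin n, if (j : ℕ) = i - 1 ∨ (j : ℕ) = i then 1 else (if w j = w' j then 1 else 0)
  else 1

/-- The product `T_1 T_2 ⋯ T_k` on `H^{⊗n}`. -/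
noncomputable def prodT (d n : ℕ) (T : Matrix (Fin d × Fin d) (Fin d × Fin d) ℂ) (k : ℕ) :
    Matrix (Fin n → Fin d) (Fin n → Fin d) ℂ :=
  ((List.range k).map (fun j => Ti d n T (j + 1))).prod

/-- The reversed product `T_k T_{k-1} ⋯ T_1` on `H^{⊗n}`. -/
noncomputable def prodTrev (d n : ℕ) (T : Matrix (Fin d × Fin d) (Fin d × Fin d) ℂ) (k : ℕ) :
    Matrix (Fin n → Fin d) (Fin n → Fin d) ℂ :=
  ((List.range k).map (fun j => Ti d n T (k - j))).prod

/-- `R_n = 1 + T_1 + T_1 T_2 + ⋯ + T_1 T_2 ⋯ T_{n-1}` on `H^{⊗n}`. -/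
noncomputable def Rmat (d n : ℕ) (T : Matrix (Fin d × Fin d) (Fin d × Fin d) ℂ) :
    Matrix (Fin n → Fin d) (Fin n → Fin d) ℂ :=
  ∑ k ∈ Finset.range n, prodT d n T k

/-- `1 ⊗ A` on `H^{⊗(n+1)}`, for `A` an operator on `H^{⊗n}`. -/
noncomputable def oneTensor (d n : ℕ) (A : Matrix (Fin n → Fin d) (Fin n → Fin d) ℂ) :
    Matrix (Fin (n + 1) → Fin d) (Fin (n + 1) → Fin d) ℂ :=
  fun w w' => (if w 0 = w' 0 then 1 else 0) * A (fun j => w j.succ) (fun j => w' j.succ)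

/-- `A ⊗ 1` on `H^{⊗(n+1)}`, for `A` an operator on `H^{⊗n}`. -/
noncomputable def tensorOne (d n : ℕ) (A : Matrix (Fin n → Fin d) (Fin n → Fin d) ℂ) :
    Matrix (Fin (n + 1) → Fin d) (Fin (n + 1) → Fin d) ℂ :=
  fun w w' =>
    A (fun j => w j.castSucc) (fun j => w' j.castSucc) *
      (if w (Fin.last n) = w' (Fin.last n) then 1 else 0)

/-- The operators `P_n` on `H^{⊗n}`: `P_1 = 1`, `P_{n+1} = (1 ⊗ P_n) R_{n+1}`
(so `P_2 = R_2 = 1 + T`). -/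
noncomputable def Pmat (d : ℕ) (T : Matrix (Fin d × Fin d) (Fin d × Fin d) ℂ) :
    (n : ℕ) → Matrix (Fin n → Fin d) (Fin n → Fin d) ℂ
  | 0 => 1
  | n + 1 => oneTensor d n (Pmat d T n) * Rmat d (n + 1) T

/-- `U_n = (T_1 ⋯ T_n)(T_1 ⋯ T_{n-1}) ⋯ (T_1 T_2) T_1` on `H^{⊗m}`. -/
noncomputable def Umat (d m : ℕ) (T : Matrix (Fin d × Fin d) (Fin d × Fin d) ℂ) (n : ℕ) :
    Matrix (Fin m → Fin d) (Fin m → Fin d) ℂ :=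
  ((List.range n).map (fun j => prodT d m T (n - j))).prod

/-- The braid condition `T_1 T_2 T_1 = T_2 T_1 T_2` on `H^{⊗3}`. -/
def Braided (d : ℕ) (T : Matrix (Fin d × Fin d) (Fin d × Fin d) ℂ) : Prop :=
  Ti d 3 T 1 * Ti d 3 T 2 * Ti d 3 T 1 = Ti d 3 T 2 * Ti d 3 T 1 * Ti d 3 T 2

/-- Elementary tensor `X ⊗ Y ∈ H^{⊗(n+m)}`. -/
noncomputable def tensorVec {d n m : ℕ} (X : (Fin n → Fin d) → ℂ) (Y : (Fin m → Fin d) → ℂ) :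
    (Fin (n + m) → Fin d) → ℂ :=
  fun u => X (fun i => u (Fin.castAdd m i)) * Y (fun j => u (Fin.natAdd n j))


/-- The annihilation operator `μ(e_i*) : H^{⊗(m+1)} → H^{⊗m}`,
`e_{i_1} ⊗ ⋯ ⊗ e_{i_{m+1}} ↦ δ_{i,i_1} e_{i_2} ⊗ ⋯ ⊗ e_{i_{m+1}}`. -/
noncomputable def ann {d m : ℕ} (i : Fin d) (v : (Fin (m + 1) → Fin d) → ℂ) :
    (Fin m → Fin d) → ℂ :=
  fun u => v (Fin.cons i u)

/-- The basis vector `e_k ∈ H`. -/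
noncomputable def basisVec {d : ℕ} (k : Fin d) : (Fin 1 → Fin d) → ℂ :=
  fun u => if u 0 = k then 1 else 0

variable {d n : ℕ} (T : Matrix (Fin d × Fin d) (Fin d × Fin d) ℂ)

lemma prod_delta (c u : Fin n → Fin d) :
    (∏ j, if c j = u j then (1:ℂ) else 0) = if c = u then 1 else 0 := by
  by_cases h : c = u
  · simp [h]
  · obtain ⟨j, hj⟩ := Function.ne_iff.mp h
    rw [if_neg h]
    exact Finset.prod_eq_zero (Finset.mem_univ j) (by simp [hj])

lemma oneTensor_one : oneTensor d n 1 = 1 := by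
  ext w w'
  simp only [oneTensor, Matrix.one_apply]
  by_cases h : w = w'
  · simp [h]
  · rcases eq_or_ne (w 0) (w' 0) with h0 | h0
    · have : (fun j : Fin n => w j.succ) ≠ fun j => w' j.succ := by
        intro hc
        apply h
        funext j
        cases j using Fin.cases with
        | zero => exact h0
        | succ j => exact congrFun hc j
      simp [h0, this, h]
    · simp [h0, h]

lemma tensorOne_one : tensorOne d n 1 = 1 := by
  ext w w'
  simp only [tensorOne, Matrix.one_apply]
  by_cases h : w = w'
  · simp [h]
  · rcases eq_or_ne (w (Fin.last n)) (w' (Fin.last n)) with h0 | h0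
    · have : (fun j : Fin n => w j.castSucc) ≠ fun j => w' j.castSucc := by
        intro hc
        apply h
        funext j
        cases j using Fin.lastCases with
        | last => exact h0
        | cast j => exact congrFun hc j
      simp [h0, this, h]
    · simp [h0, h]

lemma oneTensor_mul (A B : Matrix (Fin n → Fin d) (Fin n → Fin d) ℂ) :
    oneTensor d n (A * B) = oneTensor d n A * oneTensor d n B := by
  ext w w'
  rw [Matrix.mul_apply, ← Equiv.sum_comp (Fin.consEquiv fun _ => Fin d)]
  rw [Fintype.sum_prod_type]
  simp only [Fin.consEquiv_apply, oneTensor, Fin.cons_zero, Fin.cons_succ, Matrix.mul_apply]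
  rcases eq_or_ne (w 0) (w' 0) with h0 | h0
  · simp only [h0, if_pos rfl, one_mul, Finset.mul_sum]
    rw [Finset.sum_comm]
    simp only [if_pos trivial, one_mul]
    refine Finset.sum_congr rfl fun y _ => ?_
    rw [Finset.sum_eq_single (w' 0)]
    · simp
    · intro b _ hb
      simp [if_neg (Ne.symm hb)]
    · simp
  · simp only [h0, if_neg h0, zero_mul]
    simp [h0]


lemma tensorOne_mul (A B : Matrix (Fin n → Fin d) (Fin n → Fin d) ℂ) :
    tensorOne d n (A * B) = tensorOne d n A * tensorOne d n B := by
  ext w w'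
  rw [Matrix.mul_apply, ← Equiv.sum_comp (Fin.snocEquiv fun _ => Fin d)]
  rw [Fintype.sum_prod_type]
  simp only [Fin.snocEquiv_apply, tensorOne, Fin.snoc_last, Fin.snoc_castSucc, Matrix.mul_apply]
  rcases eq_or_ne (w (Fin.last n)) (w' (Fin.last n)) with h0 | h0
  · simp only [h0, if_pos rfl, mul_one, Finset.sum_mul]
    rw [Finset.sum_comm]
    refine Finset.sum_congr rfl fun y _ => ?_
    rw [Finset.sum_eq_single (w' (Fin.last n))]
    · simp [Finset.sum_mul, mul_assoc]
    · intro b _ hb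
      simp [if_neg hb]
    · simp
  · simp only [if_neg h0, mul_zero]
    symm
    rw [Finset.sum_eq_zero]
    intro x _
    rw [Finset.sum_eq_zero]
    intro y _
    rcases eq_or_ne (w (Fin.last n)) x with hx | hx
    · have : x ≠ w' (Fin.last n) := fun hh => h0 (hx.trans hh)
      simp [if_neg this]
    · simp [if_neg hx]

lemma oneTensor_tensorOne (A : Matrix (Fin n → Fin d) (Fin n → Fin d) ℂ) :
    oneTensor d (n + 1) (tensorOne d n A) = tensorOne d (n + 1) (oneTensor d n A) := by
  ext w w'
  simp only [oneTensor, tensorOne]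
  simp only [Fin.succ_castSucc, Fin.succ_last, Fin.castSucc_zero]
  exact (mul_assoc _ _ _).symm


lemma ann_oneTensor (A : Matrix (Fin n → Fin d) (Fin n → Fin d) ℂ)
    (v : (Fin (n + 1) → Fin d) → ℂ) (i : Fin d) :
    ann i ((oneTensor d n A).mulVec v) = A.mulVec (ann i v) := by
  funext u
  simp only [ann, Matrix.mulVec, dotProduct]
  rw [← Equiv.sum_comp (Fin.consEquiv fun _ => Fin d), Fintype.sum_prod_type]
  simp only [Fin.consEquiv_apply, oneTensor, Fin.cons_zero, Fin.cons_succ]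
  rw [Finset.sum_eq_single i]
  · simp [Fin.consEquiv]
  · intro b _ hb
    rw [Finset.sum_eq_zero]
    intro y _
    simp [if_neg (fun h : i = b => hb h.symm)]
  · simp

lemma ann_zero (i : Fin d) : ann i (0 : (Fin (n + 1) → Fin d) → ℂ) = 0 := rfl

lemma tensorVec_zero_left {m : ℕ} (Y : (Fin m → Fin d) → ℂ) :
    tensorVec (d := d) (n := n) (0 : (Fin n → Fin d) → ℂ) Y = 0 := by
  funext u; simp [tensorVec]

lemma tensorOne_mulVec (A : Matrix (Fin n → Fin d) (Fin n → Fin d) ℂ)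
    (X : (Fin n → Fin d) → ℂ) (Y : (Fin 1 → Fin d) → ℂ) :
    (tensorOne d n A).mulVec (tensorVec X Y) = tensorVec (A.mulVec X) Y := by
  funext w
  simp only [Matrix.mulVec, dotProduct, tensorVec, tensorOne]
  rw [← Equiv.sum_comp (Fin.snocEquiv fun _ => Fin d), Fintype.sum_prod_type]
  have hca : ∀ (v : Fin (n + 1) → Fin d) (i : Fin n), v (Fin.castAdd 1 i) = v i.castSucc :=
    fun v i => rfl
  have hna : ∀ (v : Fin (n + 1) → Fin d) (j : Fin 1), v (Fin.natAdd n j) = v (Fin.last n) := by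
    intro v j
    congr 1
    ext
    simp [Fin.last, Subsingleton.elim j 0]
  simp only [Fin.snocEquiv_apply, Fin.snoc_last, Fin.snoc_castSucc, hca, hna]
  rw [Finset.sum_eq_single (w (Fin.last n))]
  · rw [Finset.sum_mul]
    refine Finset.sum_congr rfl fun y _ => ?_
    rw [if_pos rfl]
    ring
  · intro b _ hb
    rw [Finset.sum_eq_zero]
    intro y _
    rw [if_neg (fun h : w (Fin.last n) = b => hb h.symm)]
    ring
  · simp


lemma Ti_apply_pos (m i : ℕ) (h : 1 ≤ i ∧ i < m) (w w' : Fin m → Fin d) :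
    Ti d m T i w w' =
      T (w ⟨i - 1, by omega⟩, w ⟨i, h.2⟩) (w' ⟨i - 1, by omega⟩, w' ⟨i, h.2⟩) *
        ∏ j : Fin m, if (j : ℕ) = i - 1 ∨ (j : ℕ) = i then 1 else (if w j = w' j then 1 else 0) := by
  have e := (dif_pos h : Ti d m T i = _)
  exact congrFun (congrFun e w) w'

lemma oneTensor_Ti (i : ℕ) (h1 : 1 ≤ i) (h2 : i < n) :
    oneTensor d n (Ti d n T i) = Ti d (n + 1) T (i + 1) := by
  ext w w'
  simp only [oneTensor, Ti_apply_pos T n i (show 1 ≤ i ∧ i < n from ⟨h1, h2⟩),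
    Ti_apply_pos T (n + 1) (i + 1) (show 1 ≤ i + 1 ∧ i + 1 < n + 1 from ⟨by omega, by omega⟩)]
  rw [Fin.prod_univ_succ]
  have hz : ¬(((0 : Fin (n + 1)) : ℕ) = i + 1 - 1 ∨ ((0 : Fin (n + 1)) : ℕ) = i + 1) := by
    simp; omega
  rw [if_neg hz]
  have hsucc : ∀ j : Fin n,
      (if ((j.succ : ℕ) = i + 1 - 1 ∨ (j.succ : ℕ) = i + 1) then (1 : ℂ)
        else if w j.succ = w' j.succ then 1 else 0) =
      if ((j : ℕ) = i - 1 ∨ (j : ℕ) = i) then 1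
        else if w j.succ = w' j.succ then 1 else 0 := by
    intro j
    exact if_congr (by rw [Fin.val_succ]; omega) rfl rfl
  rw [Finset.prod_congr rfl (fun j _ => hsucc j)]
  have a1 : ((⟨i - 1, by omega⟩ : Fin n).succ : Fin (n + 1)) = ⟨i + 1 - 1, by omega⟩ := by
    ext; simp [Fin.val_succ]; omega
  have a2 : ((⟨i, h2⟩ : Fin n).succ : Fin (n + 1)) = ⟨i + 1, by omega⟩ := by
    ext; simp [Fin.val_succ]
  rw [← a1, ← a2]
  ring

lemma tensorOne_Ti (i : ℕ) (h1 : 1 ≤ i) (h2 : i < n) :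
    tensorOne d n (Ti d n T i) = Ti d (n + 1) T i := by
  ext w w'
  simp only [tensorOne, Ti_apply_pos T n i (show 1 ≤ i ∧ i < n from ⟨h1, h2⟩),
    Ti_apply_pos T (n + 1) i (show 1 ≤ i ∧ i < n + 1 from ⟨h1, by omega⟩)]
  rw [Fin.prod_univ_castSucc]
  have hz : ¬(((Fin.last n : Fin (n + 1)) : ℕ) = i - 1 ∨ ((Fin.last n : Fin (n + 1)) : ℕ) = i) := by
    simp [Fin.last]; omega
  rw [if_neg hz]
  have hcs : ∀ j : Fin n,
      (if ((j.castSucc : ℕ) = i - 1 ∨ (j.castSucc : ℕ) = i) then (1 : ℂ)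
        else if w j.castSucc = w' j.castSucc then 1 else 0) =
      if ((j : ℕ) = i - 1 ∨ (j : ℕ) = i) then 1
        else if w j.castSucc = w' j.castSucc then 1 else 0 := by
    intro j
    exact if_congr (by rw [Fin.coe_castSucc]) rfl rfl
  rw [Finset.prod_congr rfl (fun j _ => hcs j)]
  have a1 : ((⟨i - 1, by omega⟩ : Fin n).castSucc : Fin (n + 1)) = ⟨i - 1, by omega⟩ := by
    ext; simp
  have a2 : ((⟨i, h2⟩ : Fin n).castSucc : Fin (n + 1)) = ⟨i, by omega⟩ := by
    ext; simp
  rw [← a1, ← a2]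
  ring


lemma Ti_one_apply (w w' : Fin (n + 2) → Fin d) :
    Ti d (n + 2) T 1 w w' =
      T (w 0, w 1) (w' 0, w' 1) *
        ∏ j : Fin (n + 2), if (j : ℕ) = 0 ∨ (j : ℕ) = 1 then 1
          else (if w j = w' j then 1 else 0) := by
  simp only [Ti_apply_pos T (n + 2) 1 (show 1 ≤ 1 ∧ 1 < n + 2 by omega)]
  norm_num

lemma oneTensor_sq_apply (A : Matrix (Fin n → Fin d) (Fin n → Fin d) ℂ)
    (v w' : Fin (n + 2) → Fin d) :
    oneTensor d (n + 1) (oneTensor d n A) v w' =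
      (if v 0 = w' 0 then 1 else 0) * ((if v 1 = w' 1 then 1 else 0) *
        A (fun j => v j.succ.succ) (fun j => w' j.succ.succ)) := by
  simp only [oneTensor, Fin.succ_zero_eq_one]
  rfl

lemma Ti_one_comm (A : Matrix (Fin n → Fin d) (Fin n → Fin d) ℂ) :
    Ti d (n + 2) T 1 * oneTensor d (n + 1) (oneTensor d n A) =
      oneTensor d (n + 1) (oneTensor d n A) * Ti d (n + 2) T 1 := by
  ext w w'
  rw [Matrix.mul_apply, Matrix.mul_apply]
  set v₀ : Fin (n + 2) → Fin d := Fin.cons (w' 0) (Fin.cons (w' 1) (fun j => w j.succ.succ))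
    with hv₀
  set v₁ : Fin (n + 2) → Fin d := Fin.cons (w 0) (Fin.cons (w 1) (fun j => w' j.succ.succ))
    with hv₁
  have hv₀0 : v₀ 0 = w' 0 := Fin.cons_zero _ _
  have hv₀1 : v₀ 1 = w' 1 := by rw [hv₀, ← Fin.succ_zero_eq_one, Fin.cons_succ, Fin.cons_zero]
  have hv₀j : ∀ j : Fin n, v₀ j.succ.succ = w j.succ.succ := by
    intro j; rw [hv₀, Fin.cons_succ, Fin.cons_succ]
  have hv₀q : ∀ j : Fin (n + 2), ¬((j : ℕ) = 0 ∨ (j : ℕ) = 1) → v₀ j = w j := by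
    intro j hj
    cases j using Fin.cases with
    | zero => simp at hj
    | succ j' =>
      cases j' using Fin.cases with
      | zero => simp [Fin.val_succ] at hj
      | succ j'' => exact hv₀j j''
  have hv₁0 : v₁ 0 = w 0 := Fin.cons_zero _ _
  have hv₁1 : v₁ 1 = w 1 := by rw [hv₁, ← Fin.succ_zero_eq_one, Fin.cons_succ, Fin.cons_zero]
  have hv₁j : ∀ j : Fin n, v₁ j.succ.succ = w' j.succ.succ := by
    intro j; rw [hv₁, Fin.cons_succ, Fin.cons_succ]
  have hv₁q : ∀ j : Fin (n + 2), ¬((j : ℕ) = 0 ∨ (j : ℕ) = 1) → v₁ j = w' j := by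
    intro j hj
    cases j using Fin.cases with
    | zero => simp at hj
    | succ j' =>
      cases j' using Fin.cases with
      | zero => simp [Fin.val_succ] at hj
      | succ j'' => exact hv₁j j''
  rw [Finset.sum_eq_single v₀, Finset.sum_eq_single v₁]
  · rw [Ti_one_apply, oneTensor_sq_apply, Ti_one_apply, oneTensor_sq_apply]
    rw [hv₀0, hv₀1, hv₁0, hv₁1]
    have p0 : (∏ j : Fin (n + 2), if (j : ℕ) = 0 ∨ (j : ℕ) = 1 then (1:ℂ)
        else (if w j = v₀ j then 1 else 0)) = 1 := by
      apply Finset.prod_eq_one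
      intro j _
      by_cases hc : (j : ℕ) = 0 ∨ (j : ℕ) = 1
      · rw [if_pos hc]
      · rw [if_neg hc, hv₀q j hc, if_pos rfl]
    have p1 : (∏ j : Fin (n + 2), if (j : ℕ) = 0 ∨ (j : ℕ) = 1 then (1:ℂ)
        else (if v₁ j = w' j then 1 else 0)) = 1 := by
      apply Finset.prod_eq_one
      intro j _
      by_cases hc : (j : ℕ) = 0 ∨ (j : ℕ) = 1
      · rw [if_pos hc]
      · rw [if_neg hc, hv₁q j hc, if_pos rfl]
    rw [p0, p1]
    have e0 : (fun j : Fin n => v₀ j.succ.succ) = fun j => w j.succ.succ := funext hv₀j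
    have e1 : (fun j : Fin n => v₁ j.succ.succ) = fun j => w' j.succ.succ := funext hv₁j
    rw [e0, e1]
    simp
    ring
  · intro v _ hv
    obtain ⟨j, hj⟩ := Function.ne_iff.mp hv
    rw [oneTensor_sq_apply, Ti_one_apply]
    cases j using Fin.cases with
    | zero =>
      rw [hv₁0] at hj
      rw [if_neg (show ¬ w 0 = v 0 from fun h => hj h.symm)]
      ring
    | succ j' =>
      cases j' using Fin.cases with
      | zero =>
        rw [Fin.succ_zero_eq_one, hv₁1] at hj
        rw [if_neg (show ¬ w 1 = v 1 from fun h => hj h.symm)]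
        ring
      | succ j'' =>
        rw [hv₁j j''] at hj
        have : (∏ j : Fin (n + 2), if (j : ℕ) = 0 ∨ (j : ℕ) = 1 then (1:ℂ)
            else (if v j = w' j then 1 else 0)) = 0 := by
          apply Finset.prod_eq_zero (Finset.mem_univ j''.succ.succ)
          rw [if_neg (by simp [Fin.val_succ]), if_neg hj]
        rw [this]
        ring
  · simp
  · intro v _ hv
    obtain ⟨j, hj⟩ := Function.ne_iff.mp hv
    rw [oneTensor_sq_apply, Ti_one_apply]
    cases j using Fin.cases with
    | zero =>
      rw [hv₀0] at hj
      rw [if_neg (show ¬ v 0 = w' 0 from hj)]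
      ring
    | succ j' =>
      cases j' using Fin.cases with
      | zero =>
        rw [Fin.succ_zero_eq_one, hv₀1] at hj
        rw [if_neg (show ¬ v 1 = w' 1 from hj)]
        ring
      | succ j'' =>
        rw [hv₀j j''] at hj
        have : (∏ j : Fin (n + 2), if (j : ℕ) = 0 ∨ (j : ℕ) = 1 then (1:ℂ)
            else (if w j = v j then 1 else 0)) = 0 := by
          apply Finset.prod_eq_zero (Finset.mem_univ j''.succ.succ)
          rw [if_neg (by simp [Fin.val_succ]), if_neg (fun h => hj h.symm)]
        rw [this]
        ring
  · simp


lemma Ti_braid (hb : Braided d T) (m i : ℕ) (h1 : 1 ≤ i) (h2 : i + 1 < m) :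
    Ti d m T i * Ti d m T (i + 1) * Ti d m T i =
      Ti d m T (i + 1) * Ti d m T i * Ti d m T (i + 1) := by
  induction m generalizing i with
  | zero => omega
  | succ m ih =>
    rcases Nat.lt_or_ge (i + 1) m with hlt | hge
    · rw [← tensorOne_Ti (n := m) T i h1 (by omega), ← tensorOne_Ti (n := m) T (i + 1) (by omega) hlt,
        ← tensorOne_mul, ← tensorOne_mul, ← tensorOne_mul, ← tensorOne_mul, ih i h1 hlt]
    · rcases Nat.lt_or_ge 1 i with hi2 | hi1
      · have e1 : Ti d (m + 1) T i = oneTensor d m (Ti d m T (i - 1)) := by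
          have h := oneTensor_Ti (n := m) T (i - 1) (by omega) (by omega)
          rw [show i - 1 + 1 = i by omega] at h
          exact h.symm
        have e2 : Ti d (m + 1) T (i + 1) = oneTensor d m (Ti d m T i) :=
          (oneTensor_Ti T i h1 (by omega)).symm
        rw [e1, e2, ← oneTensor_mul, ← oneTensor_mul, ← oneTensor_mul, ← oneTensor_mul]
        have h := ih (i - 1) (by omega) (by omega)
        rw [show i - 1 + 1 = i by omega] at h
        exact congrArg (oneTensor d m) h
      · have hi : i = 1 := by omega
        have hm : m = 2 := by omega
        subst hi hm
        exact hb

lemma Ti_comm (i j m : ℕ) (h1 : 1 ≤ i) (hij : i + 2 ≤ j) (hj : j < m) :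
    Ti d m T i * Ti d m T j = Ti d m T j * Ti d m T i := by
  induction i generalizing m j with
  | zero => omega
  | succ i ih =>
    rcases Nat.eq_zero_or_pos i with h0 | hpos
    · subst h0
      obtain ⟨m', rfl⟩ : ∃ m', m = m' + 2 := ⟨m - 2, by omega⟩
      obtain ⟨j', rfl⟩ : ∃ j', j = j' + 2 := ⟨j - 2, by omega⟩
      have e : Ti d (m' + 2) T (j' + 2) =
          oneTensor d (m' + 1) (oneTensor d m' (Ti d m' T j')) := by
        rw [oneTensor_Ti T j' (by omega) (by omega),
          oneTensor_Ti T (j' + 1) (by omega) (by omega)]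
      rw [show (0 : ℕ) + 1 = 1 from rfl, e]
      exact Ti_one_comm T _
    · obtain ⟨m', rfl⟩ : ∃ m', m = m' + 1 := ⟨m - 1, by omega⟩
      obtain ⟨j', rfl⟩ : ∃ j', j = j' + 1 := ⟨j - 1, by omega⟩
      rw [← oneTensor_Ti (n := m') T i hpos (by omega), ← oneTensor_Ti (n := m') T j' (by omega) (by omega),
        ← oneTensor_mul, ← oneTensor_mul]
      exact congrArg (oneTensor d m') (ih j' m' hpos (by omega) (by omega))

lemma prodT_zero : prodT d n T 0 = 1 := by simp [prodT]

lemma prodT_succ (k : ℕ) : prodT d n T (k + 1) = prodT d n T k * Ti d n T (k + 1) := by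
  rw [prodT, prodT, List.range_succ, List.map_append, List.prod_append]
  simp

lemma prodT_head (k : ℕ) :
    prodT d n T (k + 1) =
      Ti d n T 1 * ((List.range k).map (fun j => Ti d n T (j + 2))).prod := by
  rw [prodT, List.range_succ_eq_map, List.map_cons, List.prod_cons, List.map_map]
  rfl

lemma Ti_comm_prodT (j k m : ℕ) (hk : k + 2 ≤ j) (hj : j < m) :
    Ti d m T j * prodT d m T k = prodT d m T k * Ti d m T j := by
  induction k with
  | zero => rw [prodT_zero, one_mul, mul_one]
  | succ k ihk =>
    rw [prodT_succ, ← mul_assoc, ihk (by omega), mul_assoc, mul_assoc,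
      Ti_comm T (k + 1) j m (by omega) (by omega) hj]

lemma intertwine (hb : Braided d T) (m i k : ℕ) (h1 : 1 ≤ i) (hik : i + 1 ≤ k) (hk : k < m) :
    Ti d m T (i + 1) * prodT d m T k = prodT d m T k * Ti d m T i := by
  induction k with
  | zero => omega
  | succ k ihk =>
    rcases Nat.lt_or_ge (i + 1) (k + 1) with hlt | hge
    · rw [prodT_succ, ← mul_assoc, ihk (by omega) (by omega), mul_assoc, mul_assoc,
        ← Ti_comm T i (k + 1) m h1 (by omega) hk]
    · have hki : i = k := by omega
      subst hki
      obtain ⟨i', rfl⟩ : ∃ i', i = i' + 1 := ⟨i - 1, by omega⟩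
      have c1 := Ti_comm_prodT T (i' + 1 + 1) i' m (by omega) hk
      have hbr := Ti_braid T hb m (i' + 1) (by omega) (by omega)
      rw [prodT_succ, prodT_succ]
      simp only [← mul_assoc]
      rw [c1]
      simp only [mul_assoc] at hbr ⊢
      rw [hbr]


lemma oneTensor_sum (s : Finset ℕ) (f : ℕ → Matrix (Fin n → Fin d) (Fin n → Fin d) ℂ) :
    oneTensor d n (∑ k ∈ s, f k) = ∑ k ∈ s, oneTensor d n (f k) := by
  ext w w'
  simp [oneTensor, Matrix.sum_apply, Finset.mul_sum]

lemma tensorOne_sum (s : Finset ℕ) (f : ℕ → Matrix (Fin n → Fin d) (Fin n → Fin d) ℂ) :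
    tensorOne d n (∑ k ∈ s, f k) = ∑ k ∈ s, tensorOne d n (f k) := by
  ext w w'
  simp [tensorOne, Matrix.sum_apply, Finset.sum_mul]

lemma oneTensor_prodT (k : ℕ) (hk : k < n) :
    ((List.range k).map (fun j => Ti d (n + 1) T (j + 2))).prod =
      oneTensor d n (prodT d n T k) := by
  induction k with
  | zero => simp [prodT_zero, oneTensor_one]
  | succ k ih =>
    rw [List.range_succ, List.map_append, List.prod_append, ih (by omega)]
    simp only [List.map_cons, List.map_nil, List.prod_cons, List.prod_nil, mul_one]
    rw [prodT_succ, oneTensor_mul, oneTensor_Ti T (k + 1) (by omega) hk]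

lemma tensorOne_prodT (k : ℕ) (hk : k < n) :
    tensorOne d n (prodT d n T k) = prodT d (n + 1) T k := by
  induction k with
  | zero => simp [prodT_zero, tensorOne_one]
  | succ k ih =>
    rw [prodT_succ, tensorOne_mul, ih (by omega), tensorOne_Ti T (k + 1) (by omega) hk,
      ← prodT_succ]

lemma prodT_shift (hb : Braided d T) (N k : ℕ) (hk : k < N) :
    prodT d (N + 1) T N * prodT d (N + 1) T k =
      ((List.range k).map (fun j => Ti d (N + 1) T (j + 2))).prod * prodT d (N + 1) T N := by
  induction k with
  | zero => simp [prodT_zero]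
  | succ k ih =>
    rw [prodT_succ, ← mul_assoc, ih (by omega), List.range_succ, List.map_append,
      List.prod_append]
    simp only [List.map_cons, List.map_nil, List.prod_cons, List.prod_nil, mul_one]
    rw [mul_assoc, mul_assoc]
    congr 1
    have h := intertwine T hb (N + 1) (k + 1) N (by omega) (by omega) (by omega)
    rw [show k + 1 + 1 = k + 2 from rfl] at h
    exact h.symm

lemma R_intertwine (hb : Braided d T) (N : ℕ) :
    oneTensor d N (Rmat d N T) * prodT d (N + 1) T N =
      prodT d (N + 1) T N * tensorOne d N (Rmat d N T) := by
  rw [Rmat, oneTensor_sum, tensorOne_sum, Finset.sum_mul, Finset.mul_sum]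
  refine Finset.sum_congr rfl fun k hk => ?_
  have hkn : k < N := Finset.mem_range.mp hk
  rw [← oneTensor_prodT T k hkn, tensorOne_prodT T k hkn]
  exact (prodT_shift T hb N k hkn).symm

lemma P_intertwine (hb : Braided d T) (n : ℕ) :
    oneTensor d n (Pmat d T n) * prodT d (n + 1) T n =
      prodT d (n + 1) T n * tensorOne d n (Pmat d T n) := by
  induction n with
  | zero => simp [Pmat, prodT_zero, oneTensor_one, tensorOne_one]
  | succ n ih =>
    have hP : Pmat d T (n + 1) = oneTensor d n (Pmat d T n) * Rmat d (n + 1) T := rfl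
    rw [hP, oneTensor_mul, tensorOne_mul, mul_assoc, R_intertwine T hb (n + 1),
      ← mul_assoc, ← mul_assoc]
    congr 1
    rw [prodT_head, oneTensor_prodT T n (by omega), ← mul_assoc,
      ← Ti_one_comm T (Pmat d T n), mul_assoc, ← oneTensor_mul, ih, oneTensor_mul,
      oneTensor_tensorOne, mul_assoc]


/-- Let `T` be a braided self-adjoint contraction on `H ⊗ H` (`H` finite-dimensional).
If `X ∈ ker P_n` (here `n ≥ 2` is written as `n + 1`), then for every `i` the element
`e_i* ⊗ X`, rewritten via the Wick relations, lies in `ker P_{n-1} + ker P_n ⊗ H*`;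
concretely, `μ(e_i*) R_n X ∈ ker P_{n-1}` and `μ(e_i*) T_1 T_2 ⋯ T_n (X ⊗ e_k) ∈ ker P_n`
for each `k`, where `μ(e_i*)` is the annihilation operator. -/
theorem ann_ker (d n : ℕ) (hn : 1 ≤ n) (T : Matrix (Fin d × Fin d) (Fin d × Fin d) ℂ)
    (hsa : T.IsHermitian) (hcontr : ‖Matrix.toEuclideanCLM (𝕜 := ℂ) T‖ ≤ 1)
    (hbraid : Braided d T)
    (X : (Fin (n + 1) → Fin d) → ℂ) (hX : (Pmat d T (n + 1)).mulVec X = 0) (i : Fin d) :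
    (Pmat d T n).mulVec (ann i ((Rmat d (n + 1) T).mulVec X)) = 0 ∧
      ∀ k : Fin d,
        (Pmat d T (n + 1)).mulVec
            (ann i ((prodT d (n + 2) T (n + 1)).mulVec (tensorVec (d := d) (n := n + 1) (m := 1) X (basisVec k)))) = 0 := by
  constructor
  · rw [← ann_oneTensor, Matrix.mulVec_mulVec]
    have hP : oneTensor d n (Pmat d T n) * Rmat d (n + 1) T = Pmat d T (n + 1) := rfl
    rw [hP, hX]
    exact ann_zero i
  · intro k
    have hPI : oneTensor d (n + 1) (Pmat d T (n + 1)) * prodT d (n + 2) T (n + 1) =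
        prodT d (n + 2) T (n + 1) * tensorOne d (n + 1) (Pmat d T (n + 1)) :=
      P_intertwine T hbraid (n + 1)
    rw [← ann_oneTensor, Matrix.mulVec_mulVec, hPI, ← Matrix.mulVec_mulVec,
      tensorOne_mulVec, hX, tensorVec_zero_left, Matrix.mulVec_zero]
    exact ann_zero i

end Wick
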